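/- Let 1 < p < ∞ and let A₁ ≪ A₂ ≪ ... be diagonal operators on ℓᵖ converging to the identity in SOT (with A₋₁ = A₀ = 0). If (xₙ)ₙ≥₁ is a sequence in ℓᵖ with ∑ₙ ‖xₙ‖ᵖ < ∞ and each xₙ lies in the range of Aₙ₊₁ − Aₙ₋₂, then ‖∑ₙ xₙ‖ᵖ ≤ 4ᵖ ∑ₙ ‖xₙ‖ᵖ. -/

import Mathlib

open scoped ENNReal

private lemma disj_add_norm {p : ℝ≥0∞} [Fact (1 ≤ p)] (hpt : 0 < p.toReal)
    (f g : lp (fun _ : ℕ => ℂ) p) (h : ∀ i, f i = 0 ∨ g i = 0) :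
    ‖f + g‖ ^ p.toReal = ‖f‖ ^ p.toReal + ‖g‖ ^ p.toReal := by
  rw [lp.norm_rpow_eq_tsum hpt, lp.norm_rpow_eq_tsum hpt, lp.norm_rpow_eq_tsum hpt,
    ← Summable.tsum_add ((lp.memℓp f).summable hpt) ((lp.memℓp g).summable hpt)]
  refine tsum_congr fun i => ?_
  rcases h i with h0 | h0 <;>
    simp [h0, Real.zero_rpow hpt.ne']

private lemma disj_sum_norm {p : ℝ≥0∞} [Fact (1 ≤ p)] (hpt : 0 < p.toReal)
    (f : ℕ → lp (fun _ : ℕ => ℂ) p) (F : Finset ℕ)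
    (h : ∀ a ∈ F, ∀ b ∈ F, a ≠ b → ∀ i, f a i = 0 ∨ f b i = 0) :
    ‖∑ n ∈ F, f n‖ ^ p.toReal = ∑ n ∈ F, ‖f n‖ ^ p.toReal := by
  classical
  induction F using Finset.cons_induction with
  | empty => simp [Real.zero_rpow hpt.ne']
  | cons a F ha ih =>
    rw [Finset.sum_cons, Finset.sum_cons,
      ← ih (fun u hu v hv huv => h u (Finset.mem_cons_of_mem hu) v
        (Finset.mem_cons_of_mem hv) huv)]
    refine disj_add_norm hpt _ _ fun i => ?_
    by_cases hfa : f a i = 0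
    · exact Or.inl hfa
    · refine Or.inr ?_
      have hz : ∀ b ∈ F, f b i = 0 := fun b hb =>
        ((h a (Finset.mem_cons_self a F) b (Finset.mem_cons_of_mem hb)
          (fun e => ha (by rw [e]; exact hb))) i).resolve_left hfa
      rw [lp.coeFn_sum, Finset.sum_apply]
      exact Finset.sum_eq_zero hz

/-- With `A₁ ≪ A₂ ≪ ...` diagonal operators on ℓᵖ converging to the identity in SOT
(and `A₋₁ = A₀ = 0`), if `∑ ‖xₙ‖ᵖ < ∞` and each `xₙ` lies in the range of `Aₙ₊₁ − Aₙ₋₂`, then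
`‖∑ₙ xₙ‖ᵖ ≤ 4ᵖ ∑ₙ ‖xₙ‖ᵖ`. (The sequence is indexed so that `x 0 = 0` and `x n` for `n ≥ 1`
corresponds to the paper's `xₙ`; natural subtraction realises `A₋₁ = A₀ = 0`.) -/
theorem stmt1 (p : ℝ≥0∞) [Fact (1 ≤ p)] (hp : 1 < p) (hp' : p ≠ ⊤)
    (A : ℕ → (lp (fun _ : ℕ => ℂ) p →L[ℂ] lp (fun _ : ℕ => ℂ) p))
    (w : ℕ → ℕ → ℝ)
    (hA0 : A 0 = 0)
    (hdiag : ∀ n (x : lp (fun _ : ℕ => ℂ) p) (i : ℕ), (A n x) i = (w n i : ℂ) * x i)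
    (hfin : ∀ n, (Function.support (w n)).Finite)
    (hrange : ∀ n i, w n i ∈ Set.Icc (0 : ℝ) 1)
    (hchain : ∀ n, 1 ≤ n → ∀ i, w n i ≠ 0 → w (n + 1) i = 1)
    (hSOT : ∀ x : lp (fun _ : ℕ => ℂ) p,
      Filter.Tendsto (fun n => A n x) Filter.atTop (nhds x))
    (x : ℕ → lp (fun _ : ℕ => ℂ) p)
    (hx0 : x 0 = 0)
    (hxrange : ∀ n, 1 ≤ n → x n ∈ Set.range ⇑(A (n + 1) - A (n - 2)))
    (hxsum : Summable fun n => ‖x n‖ ^ p.toReal) :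
    ‖∑' n : ℕ, x n‖ ^ p.toReal ≤ 4 ^ p.toReal * ∑' n : ℕ, ‖x n‖ ^ p.toReal := by
  classical
  have hpt1 : 1 < p.toReal := by
    have h := ENNReal.toReal_strict_mono hp' hp
    simpa using h
  have hpt : 0 < p.toReal := lt_trans one_pos hpt1
  -- coordinate formula for x n
  have hcoord : ∀ n, 1 ≤ n → ∃ y : lp (fun _ : ℕ => ℂ) p,
      ∀ i, x n i = ((w (n + 1) i : ℂ) - (w (n - 2) i : ℂ)) * y i := by
    intro n hn
    obtain ⟨y, hy⟩ := hxrange n hn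
    refine ⟨y, fun i => ?_⟩
    rw [← hy]
    simp only [ContinuousLinearMap.sub_apply, lp.coeFn_sub, Pi.sub_apply, hdiag]
    ring
  -- w 0 vanishes
  have hw0 : ∀ i, w 0 i = 0 := by
    intro i
    have h := hdiag 0 (lp.single p i 1) i
    rw [hA0] at h
    simp only [ContinuousLinearMap.zero_apply, lp.coeFn_zero, Pi.zero_apply,
      lp.single_apply_self, mul_one] at h
    exact_mod_cast h.symm
  -- once nonzero, the weights become 1 at the next stage and stay 1
  have hone : ∀ n, 1 ≤ n → ∀ i, w n i ≠ 0 → ∀ m, n + 1 ≤ m → w m i = 1 := by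
    intro n hn i hwn m hm
    refine Nat.le_induction ?_ ?_ m hm
    · exact hchain n hn i hwn
    · intro m hm ih
      exact hchain m (by omega) i (by rw [ih]; exact one_ne_zero)
  -- support of x n is inside the support of w (n+1)
  have hsupp : ∀ n, 1 ≤ n → ∀ i, x n i ≠ 0 → w (n + 1) i ≠ 0 := by
    intro n hn i hxi hw1
    obtain ⟨y, hy⟩ := hcoord n hn
    have hx := hy i
    have hwn2 : w (n - 2) i ≠ 0 := by
      intro h0
      apply hxi
      rw [hx, hw1, h0]
      simp
    rcases le_or_gt n 2 with h2 | h2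
    · have hz : n - 2 = 0 := by omega
      exact hwn2 (by rw [hz]; exact hw0 i)
    · have h1 : w (n + 1) i = 1 := hone (n - 2) (by omega) i hwn2 (n + 1) (by omega)
      rw [hw1] at h1
      norm_num at h1
  -- disjointness of supports four apart
  have hdisj : ∀ n m, n + 4 ≤ m → ∀ i, x n i ≠ 0 → x m i = 0 := by
    intro n m hnm i hxi
    rcases Nat.eq_zero_or_pos n with rfl | hn
    · exact absurd (by rw [hx0]; rfl) hxi
    · have hw1 : w (n + 1) i ≠ 0 := hsupp n hn i hxi
      obtain ⟨y, hy⟩ := hcoord m (by omega)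
      rw [hy i]
      have ha : w (m + 1) i = 1 := hone (n + 1) (by omega) i hw1 (m + 1) (by omega)
      have hb : w (m - 2) i = 1 := hone (n + 1) (by omega) i hw1 (m - 2) (by omega)
      rw [ha, hb]
      simp
  -- residue classes mod 4
  have hinj : ∀ j : ℕ, Function.Injective (fun k : ℕ => 4 * k + j) := by
    intro j a b h
    have h' : 4 * a + j = 4 * b + j := h
    omega
  have hcdisj : ∀ j, ∀ k k' : ℕ, k ≠ k' → ∀ i, x (4 * k + j) i = 0 ∨ x (4 * k' + j) i = 0 := by
    intro j k k' hkk i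
    by_cases h1 : x (4 * k + j) i = 0
    · exact Or.inl h1
    rcases lt_or_gt_of_ne hkk with h | h
    · exact Or.inr (hdisj _ _ (by omega) i h1)
    · by_cases h2 : x (4 * k' + j) i = 0
      · exact Or.inr h2
      · exact absurd (hdisj _ _ (by omega) i h2) h1
  have hsumc : ∀ j, Summable (fun k => ‖x (4 * k + j)‖ ^ p.toReal) := by
    intro j
    have := hxsum.comp_injective (hinj j)
    exact this
  -- summability of each class
  have hcsummable : ∀ j, Summable (fun k => x (4 * k + j)) := by
    intro j
    rw [summable_iff_vanishing_norm]
    intro ε hε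
    obtain ⟨s, hs⟩ := summable_iff_vanishing_norm.1 (hsumc j) (ε ^ p.toReal)
      (Real.rpow_pos_of_pos hε _)
    refine ⟨s, fun t ht => ?_⟩
    have heq := disj_sum_norm hpt (fun k => x (4 * k + j)) t
      (fun a _ b _ hab => hcdisj j a b hab)
    have hlt : ∑ k ∈ t, ‖x (4 * k + j)‖ ^ p.toReal < ε ^ p.toReal := by
      have h2 := hs t ht
      rwa [Real.norm_eq_abs, abs_of_nonneg (Finset.sum_nonneg fun k _ =>
        Real.rpow_nonneg (norm_nonneg _) _)] at h2
    by_contra hge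
    push_neg at hge
    have h3 : ε ^ p.toReal ≤ ‖∑ k ∈ t, x (4 * k + j)‖ ^ p.toReal :=
      Real.rpow_le_rpow hε.le hge hpt.le
    rw [heq] at h3
    linarith
  -- class sums obey the ℓᵖ bound
  have hcb : ∀ j, ‖∑' k, x (4 * k + j)‖ ^ p.toReal ≤ ∑' n, ‖x n‖ ^ p.toReal := by
    intro j
    have htend : Filter.Tendsto (fun N => ‖∑ k ∈ Finset.range N, x (4 * k + j)‖ ^ p.toReal)
        Filter.atTop (nhds (‖∑' k, x (4 * k + j)‖ ^ p.toReal)) :=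
      ((hcsummable j).hasSum.tendsto_sum_nat.norm).rpow_const (Or.inr hpt.le)
    refine le_of_tendsto htend (Filter.Eventually.of_forall fun N => ?_)
    rw [disj_sum_norm hpt (fun k => x (4 * k + j)) (Finset.range N)
      (fun a _ b _ hab => hcdisj j a b hab)]
    calc ∑ k ∈ Finset.range N, ‖x (4 * k + j)‖ ^ p.toReal
        ≤ ∑' k, ‖x (4 * k + j)‖ ^ p.toReal :=
          Summable.sum_le_tsum _ (fun k _ => Real.rpow_nonneg (norm_nonneg _) _) (hsumc j)
      _ ≤ ∑' n, ‖x n‖ ^ p.toReal :=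
          Summable.tsum_le_tsum_of_inj _ (hinj j) (fun c _ => Real.rpow_nonneg (norm_nonneg _) _)
            (fun k => le_rfl) (hsumc j) hxsum
  -- split x into residue classes
  set g : ℕ → ℕ → lp (fun _ : ℕ => ℂ) p := fun j n => if n % 4 = j then x n else 0 with hg
  have hgdecomp : ∀ n, x n = ∑ j ∈ Finset.range 4, g j n := by
    intro n
    simp only [hg]
    rw [Finset.sum_ite_eq (Finset.range 4) (n % 4) (fun _ => x n)]
    simp [Nat.mod_lt n (by norm_num : 0 < 4)]
  have hg_supp : ∀ j, ∀ n, n ∉ Set.range (fun k : ℕ => 4 * k + j) → g j n = 0 := by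
    intro j n hn
    simp only [hg]
    rw [if_neg]
    intro hmod
    exact hn ⟨n / 4, by show 4 * (n / 4) + j = n; omega⟩
  have hg_comp : ∀ j < 4, ∀ k, g j (4 * k + j) = x (4 * k + j) := by
    intro j hj k
    simp only [hg]
    rw [if_pos (by omega)]
  have hg_summable : ∀ j < 4, Summable (g j) := by
    intro j hj
    refine ((hinj j).summable_iff (hg_supp j)).1 ?_
    exact (hcsummable j).congr fun k => (hg_comp j hj k).symm
  have hg_tsum : ∀ j < 4, ∑' n, g j n = ∑' k, x (4 * k + j) := by
    intro j hj
    have h1 : Function.support (g j) ⊆ Set.range (fun k : ℕ => 4 * k + j) := by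
      intro n hn
      by_contra hc
      exact hn (hg_supp j n hc)
    have h2 := (hinj j).tsum_eq (f := g j) h1
    rw [← h2]
    exact tsum_congr fun k => hg_comp j hj k
  have htsum_decomp : ∑' n, x n = ∑ j ∈ Finset.range 4, ∑' k, x (4 * k + j) := by
    calc ∑' n, x n = ∑' n, ∑ j ∈ Finset.range 4, g j n := tsum_congr hgdecomp
      _ = ∑ j ∈ Finset.range 4, ∑' n, g j n :=
          Summable.tsum_finsetSum fun j hj => hg_summable j (Finset.mem_range.1 hj)
      _ = ∑ j ∈ Finset.range 4, ∑' k, x (4 * k + j) :=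
          Finset.sum_congr rfl fun j hj => hg_tsum j (Finset.mem_range.1 hj)
  have hS0 : 0 ≤ ∑' n, ‖x n‖ ^ p.toReal :=
    tsum_nonneg fun n => Real.rpow_nonneg (norm_nonneg _) _
  have hnorm : ‖∑' n, x n‖ ≤ 4 * (∑' n, ‖x n‖ ^ p.toReal) ^ (p.toReal)⁻¹ := by
    rw [htsum_decomp]
    calc ‖∑ j ∈ Finset.range 4, ∑' k, x (4 * k + j)‖
        ≤ ∑ j ∈ Finset.range 4, ‖∑' k, x (4 * k + j)‖ := norm_sum_le _ _
      _ ≤ ∑ _j ∈ Finset.range 4, (∑' n, ‖x n‖ ^ p.toReal) ^ (p.toReal)⁻¹ := by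
          refine Finset.sum_le_sum fun j hj => ?_
          calc ‖∑' k, x (4 * k + j)‖
              = (‖∑' k, x (4 * k + j)‖ ^ p.toReal) ^ (p.toReal)⁻¹ :=
                (Real.rpow_rpow_inv (norm_nonneg _) hpt.ne').symm
            _ ≤ (∑' n, ‖x n‖ ^ p.toReal) ^ (p.toReal)⁻¹ :=
                Real.rpow_le_rpow (Real.rpow_nonneg (norm_nonneg _) _) (hcb j)
                  (inv_nonneg.2 hpt.le)
      _ = 4 * (∑' n, ‖x n‖ ^ p.toReal) ^ (p.toReal)⁻¹ := by
          rw [Finset.sum_const, Finset.card_range]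
          push_cast
          ring
  calc ‖∑' n, x n‖ ^ p.toReal
      ≤ (4 * (∑' n, ‖x n‖ ^ p.toReal) ^ (p.toReal)⁻¹) ^ p.toReal :=
        Real.rpow_le_rpow (norm_nonneg _) hnorm hpt.le
    _ = 4 ^ p.toReal * ∑' n, ‖x n‖ ^ p.toReal := by
        rw [Real.mul_rpow (by norm_num) (Real.rpow_nonneg hS0 _),
          Real.rpow_inv_rpow hS0 hpt.ne']
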